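/- arXiv:1208.4586 — 9 statements merged into one kernel-verified Lean document; each statement's English description precedes it below -/
import Mathlib

section
/- Let μ : D → H be a c-smooth projection, i.e., μ(D) = D for all D ∈ H and d(μ(D), μ(D')) ≤ c for all adjacent D ~ D'. Then for any query f : D → ℝ, the composed query f_H = f ∘ μ satisfies GS_{f_H} ≤ c · RS_f(H), where GS is global sensitivity (max of |f_H(D1) − f_H(D2)| over adjacent pairs) and RS_f(H) is the restricted sensitivity of f over H. -/
/-- If `μ : D → H` is a `c`-smooth projection (it fixes `H` pointwise and maps adjacent
datasets to datasets at distance at most `c`), and `R` is the restricted sensitivity of `f`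
over `H` (so `|f D1 - f D2| ≤ R · d(D1,D2)` for all `D1, D2 ∈ H`), then the composed query
`f_H = f ∘ μ` has global sensitivity at most `c · R`: for every adjacent pair the values of
`f ∘ μ` differ by at most `c · R`. -/
theorem stmt_2 {D : Type*} (A : SimpleGraph D) (H : Set D)
    (μ : D → D) (hrange : ∀ x, μ x ∈ H) (hfix : ∀ x ∈ H, μ x = x)
    (c R : ℝ) (hR : 0 ≤ R)
    (hsmooth : ∀ x y, A.Adj x y → (A.dist (μ x) (μ y) : ℝ) ≤ c)
    (f : D → ℝ)
    (hRS : ∀ x ∈ H, ∀ y ∈ H, |f x - f y| ≤ R * (A.dist x y : ℝ)) :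
    ∀ x y, A.Adj x y → |f (μ x) - f (μ y)| ≤ c * R := by
  intro x y hxy
  calc |f (μ x) - f (μ y)| ≤ R * (A.dist (μ x) (μ y) : ℝ) :=
        hRS _ (hrange x) _ (hrange y)
    _ ≤ R * c := by
        exact mul_le_mul_of_nonneg_left (hsmooth x y hxy) hR
    _ = c * R := mul_comm R c
end

section
/- Let μ : D → H̄ be a projection of H with a c-smooth distance estimator d̂, and let f : D → ℝ with restricted sensitivity R = RS_f(H̄). Define f_H = f ∘ μ. Then for every D ∈ D, the local sensitivity satisfies LS_{f_H}(D) ≤ R · (2·d̂(D) + c + 1). -/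
/-- Let `μ : D → H̄` be a projection of `H` with `c`-smooth distance estimator `dhat`, and
let `R = RS_f(H̄)` be the restricted sensitivity of `f` over `H̄`.  Then the local
sensitivity of `f_H = f ∘ μ` at any dataset `x` is at most `R · (2·dhat x + c + 1)`:
for every neighbor `y` of `x`, `|f (μ x) - f (μ y)| ≤ R · (2·dhat x + c + 1)`. -/
theorem stmt_5 {D : Type*} (A : SimpleGraph D) (hconn : A.Connected)
    (H Hbar : Set D) (hHH : H ⊆ Hbar)
    (μ : D → D) (hrange : ∀ x, μ x ∈ Hbar) (hfix : ∀ x ∈ H, μ x = x)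
    (c R : ℝ) (hR : 0 ≤ R)
    (dhat : D → ℝ)
    (h1 : ∀ x ∈ H, dhat x = 0)
    (h2 : ∀ x, (A.dist x (μ x) : ℝ) ≤ dhat x)
    (h3 : ∀ x y, A.Adj x y → |dhat x - dhat y| ≤ c)
    (f : D → ℝ)
    (hRS : ∀ x ∈ Hbar, ∀ y ∈ Hbar, |f x - f y| ≤ R * (A.dist x y : ℝ)) :
    ∀ x y, A.Adj x y → |f (μ x) - f (μ y)| ≤ R * (2 * dhat x + c + 1) := by
  intro x y hxy
  have hbound : (A.dist (μ x) (μ y) : ℝ) ≤ dhat x + 1 + dhat y := by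
    have t1 : A.dist (μ x) (μ y) ≤ A.dist (μ x) x + A.dist x (μ y) :=
      hconn.dist_triangle
    have t2 : A.dist x (μ y) ≤ A.dist x y + A.dist y (μ y) :=
      hconn.dist_triangle
    have hxy1 : A.dist x y = 1 := SimpleGraph.dist_eq_one_iff_adj.mpr hxy
    have hcomm : A.dist (μ x) x = A.dist x (μ x) := SimpleGraph.dist_comm
    have h2x := h2 x
    have h2y := h2 y
    have : (A.dist (μ x) (μ y) : ℝ) ≤ (A.dist x (μ x) : ℝ) + 1 + (A.dist y (μ y) : ℝ) := by
      push_cast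
      calc (A.dist (μ x) (μ y) : ℝ) ≤ (A.dist (μ x) x : ℝ) + (A.dist x (μ y) : ℝ) := by
            exact_mod_cast t1
        _ ≤ (A.dist (μ x) x : ℝ) + ((A.dist x y : ℝ) + (A.dist y (μ y) : ℝ)) := by
            gcongr; exact_mod_cast t2
        _ = (A.dist x (μ x) : ℝ) + 1 + (A.dist y (μ y) : ℝ) := by
            rw [hcomm, hxy1]; push_cast; ring
    linarith
  have hdy : dhat y ≤ dhat x + c := by
    have := h3 x y hxy
    have := abs_le.mp this
    linarith [this.1]
  calc |f (μ x) - f (μ y)| ≤ R * (A.dist (μ x) (μ y) : ℝ) :=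
        hRS _ (hrange x) _ (hrange y)
    _ ≤ R * (2 * dhat x + c + 1) := by
        apply mul_le_mul_of_nonneg_left _ hR
        linarith
end

section
/- In the vertex-adjacency model on labeled graphs over a fixed vertex set V, the distance between two social networks (G1, ℓ1) and (G2, ℓ2) equals |U| + VC((G1 − U) △ (G2 − U)), where U = {v : ℓ1(v) ≠ ℓ2(v)}, G − U denotes removing all edges incident to vertices of U, △ denotes symmetric difference of edge sets (viewed as a graph), and VC denotes the minimum vertex cover size of that graph. -/
open scoped Classical in
/-- The network agreeing with `N2` on everything "touched" by `T` and with `N1` elsewhere. -/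
noncomputable def fixNet {V : Type*} {m : ℕ} (N1 N2 : SimpleGraph V × (V → Fin m → ℝ))
    (T : Set V) : SimpleGraph V × (V → Fin m → ℝ) :=
  ⟨{ Adj := fun u w => ((u ∈ T ∨ w ∈ T) ∧ N2.1.Adj u w) ∨ ((u ∉ T ∧ w ∉ T) ∧ N1.1.Adj u w)
     symm := by
       constructor
       rintro u w (⟨h1, h2⟩ | ⟨h1, h2⟩)
       · exact Or.inl ⟨h1.symm, h2.symm⟩
       · exact Or.inr ⟨h1.symm, h2.symm⟩
     loopless := by
       constructor
       rintro u (⟨_, h⟩ | ⟨_, h⟩) <;> exact h.ne rfl },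
   fun u => if u ∈ T then N2.2 u else N1.2 u⟩

lemma fixNet_empty {V : Type*} {m : ℕ} (N1 N2 : SimpleGraph V × (V → Fin m → ℝ)) :
    fixNet N1 N2 ∅ = N1 := by
  refine Prod.ext ?_ ?_
  · ext u w
    simp [fixNet]
  · funext u
    simp [fixNet]

lemma fixNet_full {V : Type*} {m : ℕ} (N1 N2 : SimpleGraph V × (V → Fin m → ℝ))
    (S : Set V)
    (hcov : ∀ u w, ¬(N1.1.Adj u w ↔ N2.1.Adj u w) → u ∈ S ∨ w ∈ S)
    (hlab : ∀ u, N1.2 u ≠ N2.2 u → u ∈ S) :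
    fixNet N1 N2 S = N2 := by
  refine Prod.ext ?_ ?_
  · ext u w
    show ((u ∈ S ∨ w ∈ S) ∧ N2.1.Adj u w) ∨ ((u ∉ S ∧ w ∉ S) ∧ N1.1.Adj u w) ↔ N2.1.Adj u w
    constructor
    · rintro (⟨_, h⟩ | ⟨⟨hu, hw⟩, h⟩)
      · exact h
      · by_contra h2
        rcases hcov u w (fun hiff => h2 (hiff.mp h)) with h3 | h3
        · exact hu h3
        · exact hw h3
    · intro h
      by_cases hm : u ∈ S ∨ w ∈ S
      · exact Or.inl ⟨hm, h⟩
      · push_neg at hm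
        refine Or.inr ⟨hm, ?_⟩
        by_contra h2
        rcases hcov u w (fun hiff => h2 (hiff.mpr h)) with h3 | h3
        · exact hm.1 h3
        · exact hm.2 h3
  · funext u
    by_cases h : u ∈ S
    · simp [fixNet, h]
    · simp only [fixNet]
      rw [if_neg h]
      by_contra h2
      exact h (hlab u h2)

/-- In the vertex-adjacency model on social networks (graphs on a fixed finite vertex set
with labels `V → ℝ^m`), where two networks are adjacent iff they are distinct and agree on
all edges not incident to some vertex `v` and on all labels other than that of `v`, the
shortest-path distance between two networks `N1, N2` equals `|U| + VC((G1−U) △ (G2−U))`,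
where `U` is the set of vertices with differing labels and `VC` is the minimum size of a
vertex cover of the graph of edges (not incident to `U`) on which `N1` and `N2` differ. -/
theorem stmt_8 {V : Type*} [Fintype V] {m : ℕ}
    (NG : SimpleGraph (SimpleGraph V × (V → Fin m → ℝ)))
    (hNG : ∀ x y, NG.Adj x y ↔ x ≠ y ∧ ∃ v : V,
      (∀ u w : V, u ≠ v → w ≠ v → (x.1.Adj u w ↔ y.1.Adj u w)) ∧
      (∀ u : V, u ≠ v → x.2 u = y.2 u))
    (N1 N2 : SimpleGraph V × (V → Fin m → ℝ))
    (U : Set V) (hU : U = {v : V | N1.2 v ≠ N2.2 v})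
    (vc : ℕ)
    (hvc : IsLeast {n : ℕ | ∃ C : Set V, C.ncard = n ∧
      ∀ u w : V, u ∉ U → w ∉ U → ¬(N1.1.Adj u w ↔ N2.1.Adj u w) → u ∈ C ∨ w ∈ C} vc) :
    NG.dist N1 N2 = U.ncard + vc := by
  classical
  obtain ⟨⟨C, hCcard, hCcov⟩, hleast⟩ := hvc
  -- a minimum cover disjoint from U
  set C' : Set V := C \ U with hC'def
  have hC'cov : ∀ u w : V, u ∉ U → w ∉ U → ¬(N1.1.Adj u w ↔ N2.1.Adj u w) →
      u ∈ C' ∨ w ∈ C' := by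
    intro u w hu hw hd
    rcases hCcov u w hu hw hd with h | h
    · exact Or.inl ⟨h, hu⟩
    · exact Or.inr ⟨h, hw⟩
  have hC'card : C'.ncard = vc := by
    have h1 : vc ≤ C'.ncard := hleast ⟨C', rfl, hC'cov⟩
    have h2 : C'.ncard ≤ C.ncard := Set.ncard_le_ncard Set.diff_subset (Set.toFinite C)
    omega
  set S : Set V := U ∪ C' with hSdef
  have hUS : U ⊆ S := Set.subset_union_left
  have hScov : ∀ u w, ¬(N1.1.Adj u w ↔ N2.1.Adj u w) → u ∈ S ∨ w ∈ S := by
    intro u w hd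
    by_cases hu : u ∈ U
    · exact Or.inl (hUS hu)
    by_cases hw : w ∈ U
    · exact Or.inr (hUS hw)
    rcases hC'cov u w hu hw hd with h | h
    · exact Or.inl (Set.mem_union_right _ h)
    · exact Or.inr (Set.mem_union_right _ h)
  have hSlab : ∀ u, N1.2 u ≠ N2.2 u → u ∈ S := by
    intro u hu
    exact hUS (hU ▸ hu)
  have hfixS : fixNet N1 N2 S = N2 := fixNet_full N1 N2 S hScov hSlab
  have hScard : S.ncard = U.ncard + vc := by
    rw [hSdef, Set.ncard_union_eq Set.disjoint_sdiff_right (Set.toFinite U) (Set.toFinite C'),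
      hC'card]
  -- Upper bound: building a walk vertex by vertex
  have hwalk : ∀ L : List V, ∃ p : NG.Walk N1 (fixNet N1 N2 {v | v ∈ L}),
      p.length ≤ L.length := by
    intro L
    induction L with
    | nil =>
        have : ({v | v ∈ ([] : List V)} : Set V) = ∅ := by ext v; simp
        rw [this, fixNet_empty]
        exact ⟨SimpleGraph.Walk.nil, by simp⟩
    | cons a L ih =>
        obtain ⟨p, hp⟩ := ih
        have hins : ({v | v ∈ a :: L} : Set V) = insert a {v | v ∈ L} := by
          ext v; simp [List.mem_cons]
        rw [hins]
        by_cases heq : fixNet N1 N2 (insert a {v | v ∈ L}) = fixNet N1 N2 {v | v ∈ L}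
        · rw [heq]
          refine ⟨p, ?_⟩
          simp only [List.length_cons]
          omega
        · have hadj : NG.Adj (fixNet N1 N2 {v | v ∈ L}) (fixNet N1 N2 (insert a {v | v ∈ L})) := by
            rw [hNG]
            refine ⟨fun h => heq h.symm, a, ?_, ?_⟩
            · intro u w hu hw
              simp only [fixNet]
              simp [Set.mem_insert_iff, hu, hw]
            · intro u hu
              simp [fixNet, Set.mem_insert_iff, hu]
          refine ⟨p.concat hadj, ?_⟩
          rw [SimpleGraph.Walk.length_concat]
          simp only [List.length_cons]
          omega
  -- Lower bound ingredient: from a walk, a small "cover" set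
  have hcover : ∀ (x y : SimpleGraph V × (V → Fin m → ℝ)) (p : NG.Walk x y),
      ∃ T : Finset V, T.card ≤ p.length ∧ (∀ u, x.2 u ≠ y.2 u → u ∈ T) ∧
        (∀ u w, ¬(x.1.Adj u w ↔ y.1.Adj u w) → u ∈ T ∨ w ∈ T) := by
    intro x y p
    induction p with
    | nil =>
        refine ⟨∅, by simp, fun u hu => absurd rfl hu, fun u w hd => absurd Iff.rfl hd⟩
    | @cons x z y h p ih =>
        obtain ⟨T, hc, hl, he⟩ := ih
        obtain ⟨hne, v, hedge, hlab⟩ := (hNG x z).1 h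
        refine ⟨insert v T, ?_, ?_, ?_⟩
        · calc (insert v T).card ≤ T.card + 1 := Finset.card_insert_le v T
            _ ≤ p.length + 1 := by omega
            _ = (SimpleGraph.Walk.cons h p).length := (SimpleGraph.Walk.length_cons h p).symm
        · intro u hu
          by_cases huv : u = v
          · exact huv ▸ Finset.mem_insert_self v T
          · have : x.2 u = z.2 u := hlab u huv
            exact Finset.mem_insert_of_mem (hl u (by rw [← this]; exact hu))
        · intro u w hd
          by_cases huv : u = v
          · exact Or.inl (huv ▸ Finset.mem_insert_self v T)
          by_cases hwv : w = v
          · exact Or.inr (hwv ▸ Finset.mem_insert_self v T)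
          have hxz : x.1.Adj u w ↔ z.1.Adj u w := hedge u w huv hwv
          rcases he u w (fun hiff => hd (hxz.trans hiff)) with h' | h'
          · exact Or.inl (Finset.mem_insert_of_mem h')
          · exact Or.inr (Finset.mem_insert_of_mem h')
  -- Assemble the upper bound
  obtain ⟨p, hp⟩ := hwalk (Set.toFinite S).toFinset.toList
  have hLset : ({v | v ∈ (Set.toFinite S).toFinset.toList} : Set V) = S := by
    ext v
    simp only [Set.mem_setOf_eq, Finset.mem_toList, Set.Finite.mem_toFinset]
  have hLlen : (Set.toFinite S).toFinset.toList.length = S.ncard := by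
    rw [Finset.length_toList, Set.ncard_eq_toFinset_card S (Set.toFinite S)]
  have key : fixNet N1 N2 {v | v ∈ (Set.toFinite S).toFinset.toList} = N2 := by
    rw [hLset, hfixS]
  set p2 : NG.Walk N1 N2 := p.copy rfl key with hp2def
  have hp2len : p2.length = p.length := SimpleGraph.Walk.length_copy p rfl key
  have hub : NG.dist N1 N2 ≤ U.ncard + vc := by
    have h1 : NG.dist N1 N2 ≤ p2.length := SimpleGraph.dist_le p2
    rw [hLlen, hScard] at hp
    omega
  -- Assemble the lower bound
  have hreach : NG.Reachable N1 N2 := ⟨p2⟩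
  obtain ⟨q, hq⟩ := hreach.exists_walk_length_eq_dist
  obtain ⟨T, hTc, hTl, hTe⟩ := hcover N1 N2 q
  have hUsubT : U ⊆ (↑T : Set V) := by
    intro u hu
    rw [hU] at hu
    exact hTl u hu
  have hvcle : vc ≤ ((↑T : Set V) \ U).ncard := by
    refine hleast ⟨(↑T : Set V) \ U, rfl, ?_⟩
    intro u w hu hw hd
    rcases hTe u w hd with h | h
    · exact Or.inl ⟨h, hu⟩
    · exact Or.inr ⟨h, hw⟩
  have hsum : U.ncard + ((↑T : Set V) \ U).ncard = (↑T : Set V).ncard := by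
    rw [← Set.ncard_union_eq Set.disjoint_sdiff_right (Set.toFinite U)
      (Set.toFinite _), Set.union_diff_cancel hUsubT]
  have hlb : U.ncard + vc ≤ NG.dist N1 N2 := by
    have h1 : (↑T : Set V).ncard = T.card := Set.ncard_coe_finset T
    omega
  omega
end

section
/- With the LP of the previous statement, define d̂(G) = 4·Σ_v x*_v where x* is an optimal LP solution. Then d̂ is a 4-smooth distance estimator for the projection μ onto H_{2k} in the vertex-adjacency model: (1) d̂(G) = 0 whenever G has maximum degree ≤ k; (2) d̂(G) ≥ d(G, μ(G)), where d is vertex-adjacency distance; (3) |d̂(G1) − d̂(G2)| ≤ 4 for any two vertex-adjacent graphs G1, G2. -/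
/-- Feasibility for the degree-bounding LP of a graph `G` (as in the previous statement). -/
def LPFeasible {V : Type*} [Fintype V] [DecidableEq V] (k : ℕ) (G : SimpleGraph V)
    (x : V → ℝ) (w : V → V → ℝ) : Prop :=
  (∀ v, 0 ≤ x v) ∧ (∀ u v, 0 ≤ w u v) ∧ (∀ u v, w u v = w v u) ∧
  (∀ u v, u ≠ v → G.Adj u v → (w u v ≤ 1 ∧ 1 - x u - x v ≤ w u v)) ∧
  (∀ u v, u ≠ v → ¬ G.Adj u v → w u v = 0) ∧
  (∀ u, ∑ v ∈ Finset.univ.erase u, w u v ≤ (k : ℝ))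

/-- Auxiliary: delete all edges incident to vertices of `T`. -/
def delAt {V : Type*} [DecidableEq V] (G : SimpleGraph V) (T : Finset V) : SimpleGraph V where
  Adj u w := G.Adj u w ∧ u ∉ T ∧ w ∉ T
  symm := ⟨by rintro u w ⟨h, hu, hw⟩; exact ⟨h.symm, hw, hu⟩⟩
  loopless := ⟨by rintro u ⟨h, _⟩; exact G.loopless.irrefl u h⟩

@[simp] lemma delAt_adj {V : Type*} [DecidableEq V] (G : SimpleGraph V) (T : Finset V)
    (u w : V) : (delAt G T).Adj u w ↔ G.Adj u w ∧ u ∉ T ∧ w ∉ T := Iff.rfl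

lemma walk_aux {V : Type*} [Fintype V] [DecidableEq V]
    (NG : SimpleGraph (SimpleGraph V))
    (hNG : ∀ g h : SimpleGraph V, NG.Adj g h ↔ g ≠ h ∧ ∃ v : V,
      ∀ u w : V, u ≠ v → w ≠ v → (g.Adj u w ↔ h.Adj u w))
    (G : SimpleGraph V) (S : Finset V) :
    ∀ n (T : Finset V), T ⊆ S → (S \ T).card = n →
      ∃ p : NG.Walk (delAt G T) (delAt G S), p.length ≤ n := by
  intro n
  induction n with
  | zero =>
    intro T hTS hcard
    have hST : S ⊆ T := Finset.sdiff_eq_empty_iff_subset.mp (Finset.card_eq_zero.mp hcard)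
    have hT : T = S := Finset.Subset.antisymm hTS hST
    exact ⟨(SimpleGraph.Walk.nil : NG.Walk (delAt G S) (delAt G S)).copy
      (by rw [hT]) rfl, by simp⟩
  | succ n ih =>
    intro T hTS hcard
    have hne : (S \ T).Nonempty := Finset.card_pos.mp (by omega)
    obtain ⟨v, hv⟩ := hne
    have hvS : v ∈ S := (Finset.mem_sdiff.mp hv).1
    have hvT : v ∉ T := (Finset.mem_sdiff.mp hv).2
    have hT'S : insert v T ⊆ S := Finset.insert_subset hvS hTS
    have hcard' : (S \ insert v T).card = n := by
      rw [Finset.sdiff_insert, Finset.card_erase_of_mem hv, hcard]; omega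
    obtain ⟨p, hp⟩ := ih (insert v T) hT'S hcard'
    by_cases h : delAt G T = delAt G (insert v T)
    · exact ⟨p.copy h.symm rfl, by simpa using hp.trans (Nat.le_succ n)⟩
    · have hadj : NG.Adj (delAt G T) (delAt G (insert v T)) := by
        rw [hNG]
        refine ⟨h, v, fun u w hu hw => ?_⟩
        simp [Finset.mem_insert, hu, hw]
      exact ⟨SimpleGraph.Walk.cons hadj p, by simpa using Nat.succ_le_succ hp⟩

/-- Given, for each graph `G`, an optimal LP solution `(xs G, ws G)` and the projection
`μ G` that removes every edge with an endpoint of LP-value `≥ 1/4`, the estimator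
`dhat G = 4·Σ_v xs G v` is a `4`-smooth distance estimator for `μ` (into `H_{2k}`) in the
vertex-adjacency model (`NG`): (1) `dhat G = 0` whenever `G` has maximum degree `≤ k`;
(2) `dhat G ≥ d(G, μ G)` for the vertex-adjacency distance; and
(3) `|dhat G1 - dhat G2| ≤ 4` for vertex-adjacent `G1, G2`. -/
theorem stmt_10 {V : Type*} [Fintype V] [DecidableEq V] (k : ℕ) (hk : 0 < k)
    (NG : SimpleGraph (SimpleGraph V))
    (hNG : ∀ g h : SimpleGraph V, NG.Adj g h ↔ g ≠ h ∧ ∃ v : V,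
      ∀ u w : V, u ≠ v → w ≠ v → (g.Adj u w ↔ h.Adj u w))
    (xs : SimpleGraph V → V → ℝ) (ws : SimpleGraph V → V → V → ℝ)
    (hfeas : ∀ G, LPFeasible k G (xs G) (ws G))
    (hopt : ∀ G x' w', LPFeasible k G x' w' → ∑ v, xs G v ≤ ∑ v, x' v)
    (μ : SimpleGraph V → SimpleGraph V)
    (hμ : ∀ G u v, (μ G).Adj u v ↔ (G.Adj u v ∧ xs G u < 1/4 ∧ xs G v < 1/4))
    (dhat : SimpleGraph V → ℝ)
    (hdhat : ∀ G, dhat G = 4 * ∑ v, xs G v) :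
    (∀ G : SimpleGraph V, (∀ v, (G.neighborSet v).ncard ≤ k) → dhat G = 0) ∧
    (∀ G : SimpleGraph V, (NG.dist G (μ G) : ℝ) ≤ dhat G) ∧
    (∀ G1 G2 : SimpleGraph V, NG.Adj G1 G2 → |dhat G1 - dhat G2| ≤ 4) := by

  classical
  have hxs_nonneg : ∀ G v, 0 ≤ xs G v := fun G => (hfeas G).1
  refine ⟨?_, ?_, ?_⟩
  · -- (1)
    intro G hdeg
    have hfeas0 : LPFeasible k G (fun _ => 0) (fun u w => if G.Adj u w then 1 else 0) := by
      refine ⟨fun v => le_refl 0, fun u v => by positivity, fun u v => by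
        simp [SimpleGraph.adj_comm], fun u v hne hadj => by simp [hadj], fun u v hne hnadj => by
        simp [hnadj], fun u => ?_⟩
      have h0 : (if G.Adj u u then (1:ℝ) else 0) = 0 := by simp
      show ∑ v ∈ Finset.univ.erase u, (if G.Adj u v then (1:ℝ) else 0) ≤ (k : ℝ)
      rw [Finset.sum_erase (a := u) (f := fun v => if G.Adj u v then (1:ℝ) else 0)
        Finset.univ h0]
      have : ∑ v, (if G.Adj u v then (1:ℝ) else 0) = ((Finset.univ.filter (G.Adj u)).card : ℝ) := by
        rw [Finset.sum_boole]
      rw [this]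
      have hfn : Finset.univ.filter (G.Adj u) = G.neighborFinset u := by
        ext w; simp [SimpleGraph.mem_neighborFinset]
      rw [hfn]
      have : (G.neighborFinset u).card = (G.neighborSet u).ncard := by
        rw [Set.ncard_eq_toFinset_card', SimpleGraph.neighborFinset_def]
      rw [this]
      exact_mod_cast hdeg u
    have hle : ∑ v, xs G v ≤ 0 := by
      simpa using hopt G _ _ hfeas0
    have hge : 0 ≤ ∑ v, xs G v := Finset.sum_nonneg fun v _ => hxs_nonneg G v
    rw [hdhat G]; linarith [le_antisymm hle hge]
  · -- (2)
    intro G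
    set S : Finset V := Finset.univ.filter (fun v => 1/4 ≤ xs G v) with hS
    have hmemS : ∀ v, v ∈ S ↔ 1/4 ≤ xs G v := by intro v; simp [hS]
    have hG0 : delAt G ∅ = G := by ext u w; simp
    have hGS : delAt G S = μ G := by
      ext u w
      rw [delAt_adj, hμ]
      constructor
      · rintro ⟨ha, hu, hw⟩
        exact ⟨ha, lt_of_not_ge (fun h => hu ((hmemS u).mpr h)),
          lt_of_not_ge (fun h => hw ((hmemS w).mpr h))⟩
      · rintro ⟨ha, hu, hw⟩
        exact ⟨ha, fun h => absurd ((hmemS u).mp h) (not_le.mpr hu),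
          fun h => absurd ((hmemS w).mp h) (not_le.mpr hw)⟩
    obtain ⟨p, hp⟩ := walk_aux NG hNG G S S.card ∅ (Finset.empty_subset S) (by simp)
    have hdist : NG.dist G (μ G) ≤ S.card := by
      have h := (SimpleGraph.dist_le p).trans hp
      rw [hGS] at h
      rw [hG0] at h
      exact h
    have hcardsum : (S.card : ℝ) * (1/4) ≤ ∑ v ∈ S, xs G v := by
      have := Finset.card_nsmul_le_sum S (xs G) (1/4) (fun v hv => (hmemS v).mp hv)
      simpa [nsmul_eq_mul] using this
    have hsub : ∑ v ∈ S, xs G v ≤ ∑ v, xs G v :=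
      Finset.sum_le_sum_of_subset_of_nonneg (Finset.subset_univ S)
        (fun v _ _ => hxs_nonneg G v)
    have : (NG.dist G (μ G) : ℝ) ≤ (S.card : ℝ) := by exact_mod_cast hdist
    rw [hdhat G]; linarith
  · -- (3)
    have key : ∀ A B : SimpleGraph V,
        (∃ v : V, ∀ u w : V, u ≠ v → w ≠ v → (A.Adj u w ↔ B.Adj u w)) →
        ∑ v, xs B v ≤ ∑ v, xs A v + 1 := by
      intro A B ⟨v, hv⟩
      obtain ⟨hx0, hw0, hwsymm, hedge, hnedge, hdeg⟩ := hfeas A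
      set x' : V → ℝ := fun u => if u = v then 1 else xs A u with hx'
      set w' : V → V → ℝ := fun u w => if u = v ∨ w = v then 0 else ws A u w with hw'
      have hfeas' : LPFeasible k B x' w' := by
        refine ⟨?_, ?_, ?_, ?_, ?_, ?_⟩
        · intro u; by_cases h : u = v <;> simp [hx', h, hx0 u]
        · intro u w; by_cases h : u = v ∨ w = v <;> simp [hw', h, hw0 u w]
        · intro u w
          simp only [hw']
          by_cases h : u = v ∨ w = v
          · rw [if_pos h, if_pos (or_comm.mp h)]
          · rw [if_neg h, if_neg (fun hc => h (or_comm.mp hc))]; exact hwsymm u w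
        · intro u w hne hadj
          by_cases hu : u = v
          · constructor
            · simp [hw', hu]
            · have : 0 ≤ x' w := by by_cases h : w = v <;> simp [hx', h, hx0 w]
              have h1 : x' u = 1 := by simp [hx', hu]
              have h2 : 0 ≤ w' u w := by
                by_cases h : u = v ∨ w = v <;> simp [hw', h, hw0 u w]
              linarith
          · by_cases hw : w = v
            · constructor
              · simp [hw', hw]
              · have : 0 ≤ x' u := by by_cases h : u = v <;> simp [hx', h, hx0 u]
                have h1 : x' w = 1 := by simp [hx', hw]
                have h2 : 0 ≤ w' u w := by
                  by_cases h : u = v ∨ w = v <;> simp [hw', h, hw0 u w]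
                linarith
            · have hA : A.Adj u w := (hv u w hu hw).mpr hadj
              have := hedge u w hne hA
              simp only [hw', hx', hu, hw, or_self, if_false]
              simpa [hu, hw] using this
        · intro u w hne hnadj
          by_cases h : u = v ∨ w = v
          · simp [hw', h]
          · push_neg at h
            have : ¬ A.Adj u w := fun hA => hnadj ((hv u w h.1 h.2).mp hA)
            simp [hw', h.1, h.2, hnedge u w hne this]
        · intro u
          refine le_trans (Finset.sum_le_sum fun w _ => ?_) (hdeg u)
          by_cases h : u = v ∨ w = v <;> simp [hw', h, hw0 u w]
      have h1 : ∑ u, xs B u ≤ ∑ u, x' u := hopt B x' w' hfeas'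
      have h2 : ∑ u, x' u = (∑ u ∈ Finset.univ.erase v, xs A u) + 1 := by
        rw [← Finset.sum_erase_add _ _ (Finset.mem_univ v)]
        have hxv : x' v = 1 := by simp [hx']
        rw [hxv]
        congr 1
        apply Finset.sum_congr rfl
        intro u hu
        have : u ≠ v := Finset.ne_of_mem_erase hu
        simp [hx', this]
      have h3 : ∑ u ∈ Finset.univ.erase v, xs A u ≤ ∑ u, xs A u :=
        Finset.sum_le_sum_of_subset_of_nonneg (Finset.erase_subset _ _)
          (fun u _ _ => hxs_nonneg A u)
      linarith
    intro G1 G2 hadj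
    obtain ⟨hne, v, hv⟩ := (hNG G1 G2).mp hadj
    have h12 : ∑ u, xs G2 u ≤ ∑ u, xs G1 u + 1 := key G1 G2 ⟨v, hv⟩
    have h21 : ∑ u, xs G1 u ≤ ∑ u, xs G2 u + 1 :=
      key G2 G1 ⟨v, fun u w hu hw => (hv u w hu hw).symm⟩
    rw [hdhat G1, hdhat G2, abs_le]
    constructor <;> linarith
end

section
/- Let f be a local profile query on social networks with profile p taking values in [0,1], i.e., f(G, ℓ) = Σ_{v ∈ V} p(v, G_v) where G_v is the sub-network induced on v and its neighbors. Then in the vertex-adjacency model, for any two networks G1, G2 ∈ H_k that are vertex-adjacent (differing at one vertex's edges, same labels), |f(G1) − f(G2)| ≤ 2k + 1; and for two networks in H_k with the same edges but labels differing at one vertex, |f(G1) − f(G2)| ≤ k + 1. Consequently RS_f(H_k) ≤ 2k + 1 in the vertex-adjacency model. -/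
lemma sum_abs_diff_le' {V : Type*} [Fintype V] (g1 g2 : V → ℝ)
    (h1 : ∀ v, g1 v ∈ Set.Icc (0:ℝ) 1) (h2 : ∀ v, g2 v ∈ Set.Icc (0:ℝ) 1)
    (S : Finset V) (hS : ∀ v, v ∉ S → g1 v = g2 v) :
    |∑ v, g1 v - ∑ v, g2 v| ≤ S.card := by
  have key : ∑ v, g1 v - ∑ v, g2 v = ∑ v ∈ S, (g1 v - g2 v) := by
    rw [← Finset.sum_sub_distrib,
      ← Finset.sum_subset (Finset.subset_univ S) (fun x _ hx => by rw [hS x hx]; ring)]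
  rw [key]
  calc |∑ v ∈ S, (g1 v - g2 v)| ≤ ∑ v ∈ S, |g1 v - g2 v| :=
        Finset.abs_sum_le_sum_abs _ _
    _ ≤ ∑ _v ∈ S, (1:ℝ) := by
        refine Finset.sum_le_sum fun v _ => ?_
        rw [abs_le]
        constructor
        · linarith [(h1 v).1, (h2 v).2]
        · linarith [(h1 v).2, (h2 v).1]
    _ = S.card := by simp

/-- Let `p` be a local profile with values in `[0,1]`: `p v G ℓ` depends only on the labeled
subgraph induced on `v` and its neighbors.  Let `f G ℓ = Σ_v p v G ℓ` be the associated
local profile query.  Then for networks of maximum degree `≤ k`: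
(a) if `G1, G2` are vertex-adjacent (they agree on all edges not incident to some vertex
`v0`) and carry the same labels, then `|f G1 ℓ - f G2 ℓ| ≤ 2k + 1`; and
(b) if the edges agree and the labels differ at a single vertex, then
`|f G ℓ1 - f G ℓ2| ≤ k + 1`.  Consequently `RS_f(H_k) ≤ 2k + 1` in the vertex-adjacency
model. -/
theorem stmt_11 {V : Type*} [Fintype V] {m : ℕ} (k : ℕ)
    (p : V → SimpleGraph V → (V → Fin m → ℝ) → ℝ)
    (hrange : ∀ v G ℓ, p v G ℓ ∈ Set.Icc (0 : ℝ) 1)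
    (hloc : ∀ (v : V) (G G' : SimpleGraph V) (ℓ ℓ' : V → Fin m → ℝ),
      G.neighborSet v = G'.neighborSet v →
      (∀ u w, u ∈ insert v (G.neighborSet v) → w ∈ insert v (G.neighborSet v) →
        (G.Adj u w ↔ G'.Adj u w)) →
      (∀ u ∈ insert v (G.neighborSet v), ℓ u = ℓ' u) →
      p v G ℓ = p v G' ℓ')
    (f : SimpleGraph V → (V → Fin m → ℝ) → ℝ)
    (hf : ∀ G ℓ, f G ℓ = ∑ v, p v G ℓ) :
    (∀ (G1 G2 : SimpleGraph V) (ℓ : V → Fin m → ℝ),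
      (∀ v, (G1.neighborSet v).ncard ≤ k) → (∀ v, (G2.neighborSet v).ncard ≤ k) →
      (∃ v0 : V, ∀ u w : V, u ≠ v0 → w ≠ v0 → (G1.Adj u w ↔ G2.Adj u w)) →
      |f G1 ℓ - f G2 ℓ| ≤ 2 * (k : ℝ) + 1) ∧
    (∀ (G : SimpleGraph V) (ℓ1 ℓ2 : V → Fin m → ℝ),
      (∀ v, (G.neighborSet v).ncard ≤ k) →
      (∃ v0 : V, ∀ u : V, u ≠ v0 → ℓ1 u = ℓ2 u) →
      |f G ℓ1 - f G ℓ2| ≤ (k : ℝ) + 1) := by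
  classical
  constructor
  · rintro G1 G2 ℓ hd1 hd2 ⟨v0, hEq⟩
    rw [hf, hf]
    set S : Finset V :=
      insert v0 ((G1.neighborSet v0).toFinset ∪ (G2.neighborSet v0).toFinset) with hSdef
    have hbound : |∑ v, p v G1 ℓ - ∑ v, p v G2 ℓ| ≤ (S.card : ℝ) := by
      refine sum_abs_diff_le' _ _ (fun v => hrange v G1 ℓ) (fun v => hrange v G2 ℓ) S ?_
      intro v hv
      have hv0 : v ≠ v0 := by
        intro h; exact hv (by simp [hSdef, h])
      have hn1 : v0 ∉ G1.neighborSet v := by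
        intro h
        exact hv (by simp [hSdef, Set.mem_toFinset, (G1.adj_symm h : G1.Adj v0 v)])
      have hn2 : v0 ∉ G2.neighborSet v := by
        intro h
        exact hv (by simp [hSdef, Set.mem_toFinset, (G2.adj_symm h : G2.Adj v0 v)])
      have hns : G1.neighborSet v = G2.neighborSet v := by
        ext u
        by_cases hu : u = v0
        · subst hu
          simp only [SimpleGraph.mem_neighborSet] at *
          constructor <;> intro h <;> [exact absurd h hn1; exact absurd h hn2]
        · exact hEq v u hv0 hu
      refine hloc v G1 G2 ℓ ℓ hns ?_ (fun _ _ => rfl)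
      intro u w hu hw
      have hune : u ≠ v0 := by
        rcases hu with h | h
        · simpa [h] using hv0
        · intro he; exact hn1 (he ▸ h)
      have hwne : w ≠ v0 := by
        rcases hw with h | h
        · simpa [h] using hv0
        · intro he; exact hn1 (he ▸ h)
      exact hEq u w hune hwne
    have hcard : (S.card : ℝ) ≤ 2 * (k : ℝ) + 1 := by
      have h1 : S.card ≤ 1 + ((G1.neighborSet v0).toFinset.card
          + (G2.neighborSet v0).toFinset.card) := by
        calc S.card ≤ ((G1.neighborSet v0).toFinset ∪ (G2.neighborSet v0).toFinset).card + 1 :=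
              Finset.card_insert_le _ _
          _ ≤ ((G1.neighborSet v0).toFinset.card + (G2.neighborSet v0).toFinset.card) + 1 := by
              exact Nat.add_le_add_right (Finset.card_union_le _ _) 1
          _ = 1 + ((G1.neighborSet v0).toFinset.card + (G2.neighborSet v0).toFinset.card) := by
              ring
      have e1 : (G1.neighborSet v0).toFinset.card = (G1.neighborSet v0).ncard :=
        (Set.ncard_eq_toFinset_card' _).symm
      have e2 : (G2.neighborSet v0).toFinset.card = (G2.neighborSet v0).ncard :=
        (Set.ncard_eq_toFinset_card' _).symm
      have : S.card ≤ 1 + (k + k) := by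
        refine h1.trans ?_
        rw [e1, e2]
        exact Nat.add_le_add_left (Nat.add_le_add (hd1 v0) (hd2 v0)) 1
      calc (S.card : ℝ) ≤ ((1 + (k + k) : ℕ) : ℝ) := by exact_mod_cast this
        _ = 2 * (k : ℝ) + 1 := by push_cast; ring
    exact hbound.trans hcard
  · rintro G ℓ1 ℓ2 hd ⟨v0, hlab⟩
    rw [hf, hf]
    set S : Finset V := insert v0 (G.neighborSet v0).toFinset with hSdef
    have hbound : |∑ v, p v G ℓ1 - ∑ v, p v G ℓ2| ≤ (S.card : ℝ) := by
      refine sum_abs_diff_le' _ _ (fun v => hrange v G ℓ1) (fun v => hrange v G ℓ2) S ?_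
      intro v hv
      have hv0 : v ≠ v0 := by
        intro h; exact hv (by simp [hSdef, h])
      have hn : v0 ∉ G.neighborSet v := by
        intro h
        exact hv (by simp [hSdef, Set.mem_toFinset, (G.adj_symm h : G.Adj v0 v)])
      refine hloc v G G ℓ1 ℓ2 rfl (fun _ _ _ _ => Iff.rfl) ?_
      intro u hu
      refine hlab u ?_
      rcases hu with h | h
      · simpa [h] using hv0
      · intro he; exact hn (he ▸ h)
    have hcard : (S.card : ℝ) ≤ (k : ℝ) + 1 := by
      have h1 : S.card ≤ (G.neighborSet v0).toFinset.card + 1 := Finset.card_insert_le _ _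
      have e : (G.neighborSet v0).toFinset.card = (G.neighborSet v0).ncard :=
        (Set.ncard_eq_toFinset_card' _).symm
      have : S.card ≤ k + 1 := h1.trans (by rw [e]; exact Nat.add_le_add_right (hd v0) 1)
      exact_mod_cast this
    exact hbound.trans hcard
end

section
/- Let f be a local profile query with profile values in [0,1] on networks of max degree ≤ k. In the edge-adjacency model, if G1, G2 ∈ H_k differ by exactly one edge e = {u,v} (same labels), then |f(G1) − f(G2)| ≤ k + 1. Consequently RS_f(H_k) ≤ k + 1 in the edge-adjacency model. -/
open Finset

lemma aux_stmt12 {V : Type*} [Fintype V] {m : ℕ} (k : ℕ)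
    (p : V → SimpleGraph V → (V → Fin m → ℝ) → ℝ)
    (hrange : ∀ v G ℓ, p v G ℓ ∈ Set.Icc (0 : ℝ) 1)
    (hloc : ∀ (v : V) (G G' : SimpleGraph V) (ℓ ℓ' : V → Fin m → ℝ),
      G.neighborSet v = G'.neighborSet v →
      (∀ u w, u ∈ insert v (G.neighborSet v) → w ∈ insert v (G.neighborSet v) →
        (G.Adj u w ↔ G'.Adj u w)) →
      (∀ u ∈ insert v (G.neighborSet v), ℓ u = ℓ' u) →
      p v G ℓ = p v G' ℓ')
    (f : SimpleGraph V → (V → Fin m → ℝ) → ℝ)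
    (hf : ∀ G ℓ, f G ℓ = ∑ v, p v G ℓ)
    (G1 G2 : SimpleGraph V) (ℓ : V → Fin m → ℝ) (u v : V) (huv : u ≠ v)
    (hd1 : ∀ x, (G1.neighborSet x).ncard ≤ k)
    (hdiff : ∀ a b : V, ¬(a = u ∧ b = v) → ¬(a = v ∧ b = u) → (G1.Adj a b ↔ G2.Adj a b))
    (h1 : G1.Adj u v) :
    |f G1 ℓ - f G2 ℓ| ≤ (k : ℝ) + 1 := by
  classical
  set S : Finset V := insert u (insert v ((G1.neighborFinset u) ∩ (G1.neighborFinset v))) with hS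
  -- terms outside S vanish
  have hout : ∀ x ∈ Finset.univ, x ∉ S → p x G1 ℓ - p x G2 ℓ = 0 := by
    intro x _ hx
    have hxu : x ≠ u := by rintro rfl; exact hx (by simp [hS])
    have hxv : x ≠ v := by rintro rfl; exact hx (by simp [hS])
    have hN : G1.neighborSet x = G2.neighborSet x := by
      ext y
      exact hdiff x y (fun h => hxu h.1) (fun h => hxv h.1)
    have hadj : ∀ a b, a ∈ insert x (G1.neighborSet x) → b ∈ insert x (G1.neighborSet x) →
        (G1.Adj a b ↔ G2.Adj a b) := by
      intro a b ha hb
      by_cases hab : a = u ∧ b = v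
      · obtain ⟨rfl, rfl⟩ := hab
        exfalso
        have hau : a ∈ G1.neighborSet x := by
          rcases ha with h | h
          · exact absurd h.symm hxu
          · exact h
        have hbv : b ∈ G1.neighborSet x := by
          rcases hb with h | h
          · exact absurd h.symm hxv
          · exact h
        exact hx (by simp [hS, hxu, hxv, SimpleGraph.mem_neighborFinset,
          (SimpleGraph.mem_neighborSet _ _ _).1 hau |>.symm,
          (SimpleGraph.mem_neighborSet _ _ _).1 hbv |>.symm])
      by_cases hba : a = v ∧ b = u
      · obtain ⟨rfl, rfl⟩ := hba
        exfalso
        have hau : a ∈ G1.neighborSet x := by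
          rcases ha with h | h
          · exact absurd h.symm hxv
          · exact h
        have hbv : b ∈ G1.neighborSet x := by
          rcases hb with h | h
          · exact absurd h.symm hxu
          · exact h
        exact hx (by simp [hS, hxu, hxv, SimpleGraph.mem_neighborFinset,
          (SimpleGraph.mem_neighborSet _ _ _).1 hau |>.symm,
          (SimpleGraph.mem_neighborSet _ _ _).1 hbv |>.symm])
      · exact hdiff a b hab hba
    have := hloc x G1 G2 ℓ ℓ hN hadj (fun _ _ => rfl)
    linarith [this]
  -- card bound
  have hcard : S.card ≤ k + 1 := by
    have hsub : (G1.neighborFinset u) ∩ (G1.neighborFinset v) ⊆ (G1.neighborFinset u).erase v := by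
      intro x hx
      simp only [Finset.mem_inter] at hx
      refine Finset.mem_erase.2 ⟨?_, hx.1⟩
      rintro rfl
      have hxx : G1.Adj x x := by simpa using hx.2
      exact G1.irrefl hxx
    have hvu : v ∈ G1.neighborFinset u := by simpa using h1
    have hdeg : (G1.neighborFinset u).card ≤ k := by
      have := hd1 u
      rwa [Set.ncard_eq_toFinset_card'] at this
    have hk1 : 1 ≤ k := le_trans (Finset.card_le_card (Finset.singleton_subset_iff.2 hvu) :
        ({v} : Finset V).card ≤ _) hdeg |>.trans_eq' (by simp)
    have h0 : ((G1.neighborFinset u) ∩ (G1.neighborFinset v)).card ≤ k - 1 := by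
      calc _ ≤ ((G1.neighborFinset u).erase v).card := Finset.card_le_card hsub
        _ = (G1.neighborFinset u).card - 1 := Finset.card_erase_of_mem hvu
        _ ≤ k - 1 := Nat.sub_le_sub_right hdeg 1
    calc S.card ≤ ((G1.neighborFinset u) ∩ (G1.neighborFinset v)).card + 2 := by
          simp only [hS]
          refine (Finset.card_insert_le _ _).trans ?_
          have := Finset.card_insert_le v ((G1.neighborFinset u) ∩ (G1.neighborFinset v))
          omega
      _ ≤ (k - 1) + 2 := by omega
      _ ≤ k + 1 := by omega
  -- combine
  have hsum : f G1 ℓ - f G2 ℓ = ∑ x ∈ S, (p x G1 ℓ - p x G2 ℓ) := by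
    rw [hf, hf, ← Finset.sum_sub_distrib]
    exact (Finset.sum_subset (Finset.subset_univ S) hout).symm
  rw [hsum]
  calc |∑ x ∈ S, (p x G1 ℓ - p x G2 ℓ)| ≤ ∑ x ∈ S, |p x G1 ℓ - p x G2 ℓ| :=
        Finset.abs_sum_le_sum_abs _ _
    _ ≤ ∑ x ∈ S, 1 := by
        refine Finset.sum_le_sum fun x _ => ?_
        have h1 := hrange x G1 ℓ
        have h2 := hrange x G2 ℓ
        simp only [Set.mem_Icc] at h1 h2
        rw [abs_le]; constructor <;> linarith
    _ = (S.card : ℝ) := by simp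
    _ ≤ (k : ℝ) + 1 := by exact_mod_cast hcard

/-- Let `p` be a local profile with values in `[0,1]` and `f G ℓ = Σ_v p v G ℓ` the
associated local profile query.  In the edge-adjacency model: if `G1, G2` have maximum
degree `≤ k`, carry the same labels, and differ in exactly the single edge `{u,v}` (they
agree on every other pair, and disagree on `{u,v}`), then `|f G1 ℓ - f G2 ℓ| ≤ k + 1`.
Consequently `RS_f(H_k) ≤ k + 1` in the edge-adjacency model. -/
theorem stmt_12 {V : Type*} [Fintype V] {m : ℕ} (k : ℕ)
    (p : V → SimpleGraph V → (V → Fin m → ℝ) → ℝ)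
    (hrange : ∀ v G ℓ, p v G ℓ ∈ Set.Icc (0 : ℝ) 1)
    (hloc : ∀ (v : V) (G G' : SimpleGraph V) (ℓ ℓ' : V → Fin m → ℝ),
      G.neighborSet v = G'.neighborSet v →
      (∀ u w, u ∈ insert v (G.neighborSet v) → w ∈ insert v (G.neighborSet v) →
        (G.Adj u w ↔ G'.Adj u w)) →
      (∀ u ∈ insert v (G.neighborSet v), ℓ u = ℓ' u) →
      p v G ℓ = p v G' ℓ')
    (f : SimpleGraph V → (V → Fin m → ℝ) → ℝ)
    (hf : ∀ G ℓ, f G ℓ = ∑ v, p v G ℓ) :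
    ∀ (G1 G2 : SimpleGraph V) (ℓ : V → Fin m → ℝ) (u v : V), u ≠ v →
      (∀ x, (G1.neighborSet x).ncard ≤ k) → (∀ x, (G2.neighborSet x).ncard ≤ k) →
      (∀ a b : V, ¬(a = u ∧ b = v) → ¬(a = v ∧ b = u) → (G1.Adj a b ↔ G2.Adj a b)) →
      ¬(G1.Adj u v ↔ G2.Adj u v) →
      |f G1 ℓ - f G2 ℓ| ≤ (k : ℝ) + 1 := by
  intro G1 G2 ℓ u v huv hd1 hd2 hdiff hne
  have hloc' : ∀ (v : V) (G G' : SimpleGraph V) (ℓ ℓ' : V → Fin m → ℝ),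
      G.neighborSet v = G'.neighborSet v →
      (∀ u w, u ∈ insert v (G.neighborSet v) → w ∈ insert v (G.neighborSet v) →
        (G.Adj u w ↔ G'.Adj u w)) →
      (∀ u ∈ insert v (G.neighborSet v), ℓ u = ℓ' u) →
      p v G ℓ = p v G' ℓ' := hloc
  by_cases h : G1.Adj u v
  · exact aux_stmt12 k p hrange hloc f hf G1 G2 ℓ u v huv hd1 hdiff h
  · have h2 : G2.Adj u v := by tauto
    rw [abs_sub_comm]
    exact aux_stmt12 k p hrange hloc f hf G2 G1 ℓ u v huv hd2
      (fun a b ha hb => (hdiff a b ha hb).symm) h2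
end

section
/- Let f(G) count the number of triangles in a graph G on n ≥ 3 vertices (labels ignored). In the vertex-adjacency model, any β-smooth upper bound S on the local sensitivity of f satisfies S(G) ≥ exp(−2β)·(n − 2) for every graph G. -/
/-- The number of triangles in `G`. -/
noncomputable def triCount {V : Type*} [Fintype V] (G : SimpleGraph V) : ℕ :=
  {s : Finset V | G.IsNClique 3 s}.ncard

open Classical in
lemma triCount_eq_card {V : Type*} [Fintype V] (g : SimpleGraph V) :
    triCount g = (Finset.univ.filter (fun s => g.IsNClique 3 s)).card := by
  rw [triCount, ← Set.ncard_coe_finset]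
  congr 1
  ext s
  simp

lemma tri_lower {V : Type*} [Fintype V] (G2 G3 : SimpleGraph V) (v1 v2 : V) (hv : v1 ≠ v2)
    (hle23 : G2 ≤ G3)
    (h12 : G3.Adj v1 v2)
    (hv2 : ∀ u w, G2.Adj u w → u ≠ v2 ∧ w ≠ v2)
    (h1w : ∀ w, w ≠ v1 → w ≠ v2 → G3.Adj v1 w)
    (h2w : ∀ w, w ≠ v1 → w ≠ v2 → G3.Adj v2 w) :
    triCount G2 + (Fintype.card V - 2) ≤ triCount G3 := by
  classical
  rw [triCount_eq_card, triCount_eq_card]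
  set A := Finset.univ.filter (fun s => G2.IsNClique 3 s) with hA
  set B := Finset.univ.filter (fun s => G3.IsNClique 3 s) with hB
  set C := (Finset.univ \ {v1, v2}).image (fun w => ({v1, v2, w} : Finset V)) with hC
  have hAB : A ⊆ B := by
    intro s hs
    simp only [hA, hB, Finset.mem_filter, Finset.mem_univ, true_and] at *
    exact hs.mono hle23
  have hCB : C ⊆ B := by
    intro s hs
    simp only [hC, Finset.mem_image, Finset.mem_sdiff, Finset.mem_insert,
      Finset.mem_singleton] at hs
    obtain ⟨w, ⟨-, hw⟩, rfl⟩ := hs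
    push_neg at hw
    simp only [hB, Finset.mem_filter, Finset.mem_univ, true_and]
    rw [SimpleGraph.is3Clique_triple_iff]
    exact ⟨h12, h1w w hw.1 hw.2, h2w w hw.1 hw.2⟩
  have hdisj : Disjoint A C := by
    rw [Finset.disjoint_right]
    intro s hsC hsA
    simp only [hC, Finset.mem_image, Finset.mem_sdiff, Finset.mem_insert,
      Finset.mem_singleton] at hsC
    obtain ⟨w, ⟨-, hw⟩, rfl⟩ := hsC
    simp only [hA, Finset.mem_filter, Finset.mem_univ, true_and] at hsA
    rw [SimpleGraph.is3Clique_triple_iff] at hsA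
    exact (hv2 _ _ hsA.1).2 rfl
  have hCcard : C.card = Fintype.card V - 2 := by
    rw [hC, Finset.card_image_of_injOn]
    · rw [Finset.card_sdiff_of_subset (by simp), Finset.card_univ,
        Finset.card_insert_of_notMem (by simp [hv]), Finset.card_singleton]
    · intro a ha b hb hab
      simp only [Finset.coe_sdiff, Finset.coe_univ, Set.mem_diff, Finset.coe_insert,
        Finset.coe_singleton, Set.mem_insert_iff, Set.mem_singleton_iff] at ha hb
      push_neg at ha hb
      have hab' : ({v1, v2, a} : Finset V) = {v1, v2, b} := hab
      have : a ∈ ({v1, v2, b} : Finset V) := by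
        rw [← hab']; simp
      simp only [Finset.mem_insert, Finset.mem_singleton] at this
      rcases this with h | h | h
      · exact absurd h ha.2.1
      · exact absurd h ha.2.2
      · exact h
  have hsub : A.disjUnion C hdisj ⊆ B := by
    intro s hs
    rw [Finset.mem_disjUnion] at hs
    exact hs.elim (fun h => hAB h) (fun h => hCB h)
  calc A.card + (Fintype.card V - 2) = (A.disjUnion C hdisj).card := by
        rw [Finset.card_disjUnion, hCcard]
    _ ≤ B.card := Finset.card_le_card hsub

/-- star graph at v: v joined to everything else. -/
private def starG {V : Type*} (v : V) : SimpleGraph V :=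
  SimpleGraph.fromRel (fun u _ => u = v)

/-- delete all edges at v. -/
private def delG {V : Type*} (g : SimpleGraph V) (v : V) : SimpleGraph V where
  Adj u w := g.Adj u w ∧ u ≠ v ∧ w ≠ v
  symm := ⟨fun u w => by rintro ⟨h, h1, h2⟩; exact ⟨h.symm, h2, h1⟩⟩
  loopless := ⟨fun u => by rintro ⟨h, -, -⟩; exact g.loopless.irrefl u h⟩

private lemma starG_adj {V : Type*} {v u w : V} :
    (starG v).Adj u w ↔ u ≠ w ∧ (u = v ∨ w = v) := by
  simp [starG, SimpleGraph.fromRel_adj]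

set_option maxHeartbeats 1000000 in
/-- Let `f` count triangles in graphs on `n ≥ 3` vertices, and let `NG` be the
vertex-adjacency relation (`g ~ h` iff `g ≠ h` and they agree on all edges not incident to
some vertex).  Any `β`-smooth upper bound `S` on the local sensitivity of `f` — i.e.
`S g ≥ |f g - f h|` for adjacent `g, h`, and `S g ≥ exp(-β·d(g,h))·S h` for all `g, h` —
satisfies `S G ≥ exp(-2β)·(n - 2)` for every graph `G`. -/
theorem stmt_14 {V : Type*} [Fintype V] (hn : 3 ≤ Fintype.card V)
    (NG : SimpleGraph (SimpleGraph V))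
    (hNG : ∀ g h : SimpleGraph V, NG.Adj g h ↔ g ≠ h ∧ ∃ v : V,
      ∀ u w : V, u ≠ v → w ≠ v → (g.Adj u w ↔ h.Adj u w))
    (β : ℝ) (hβ : 0 ≤ β) (S : SimpleGraph V → ℝ)
    (hub : ∀ g h : SimpleGraph V, NG.Adj g h → |(triCount g : ℝ) - (triCount h : ℝ)| ≤ S g)
    (hsmooth : ∀ g h : SimpleGraph V, Real.exp (-β * (NG.dist g h : ℝ)) * S h ≤ S g) :
    ∀ G : SimpleGraph V, Real.exp (-2 * β) * ((Fintype.card V : ℝ) - 2) ≤ S G := by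
  classical
  intro G
  obtain ⟨v1, v2, hv⟩ := Fintype.exists_pair_of_one_lt_card (by omega) (α := V)
  set G1 : SimpleGraph V := G ⊔ starG v1 with hG1
  set G2 : SimpleGraph V := delG G1 v2 with hG2
  set G3 : SimpleGraph V := G2 ⊔ starG v2 with hG3
  have hG2adj : ∀ u w, G2.Adj u w ↔
      (G.Adj u w ∨ (u ≠ w ∧ (u = v1 ∨ w = v1))) ∧ u ≠ v2 ∧ w ≠ v2 := by
    intro u w
    simp [hG2, delG, hG1, starG_adj]
  have hG3adj : ∀ u w, G3.Adj u w ↔ G2.Adj u w ∨ (u ≠ w ∧ (u = v2 ∨ w = v2)) := by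
    intro u w
    simp [hG3, starG_adj]
  -- G2 and G3 are NG-adjacent
  have hne23 : G2 ≠ G3 := by
    intro h
    have h3 : G3.Adj v1 v2 := by rw [hG3adj]; exact Or.inr ⟨hv, Or.inr rfl⟩
    rw [← h, hG2adj] at h3
    exact h3.2.2 rfl
  have hadj23 : NG.Adj G2 G3 := by
    rw [hNG]
    refine ⟨hne23, v2, fun u w hu hw => ?_⟩
    rw [hG3adj]
    constructor
    · exact Or.inl
    · rintro (h | ⟨-, h | h⟩)
      · exact h
      · exact absurd h hu
      · exact absurd h hw
  have hle23 : G2 ≤ G3 := le_sup_left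
  -- counting triangles
  have hcount : triCount G2 + (Fintype.card V - 2) ≤ triCount G3 := by
    refine tri_lower G2 G3 v1 v2 hv hle23 ?_ ?_ ?_ ?_
    · rw [hG3adj]; exact Or.inr ⟨hv, Or.inr rfl⟩
    · intro u w h
      rw [hG2adj] at h
      exact h.2
    · intro w h1 h2
      rw [hG3adj]
      refine Or.inl ?_
      rw [hG2adj]
      exact ⟨Or.inr ⟨Ne.symm h1, Or.inl rfl⟩, hv, h2⟩
    · intro w h1 h2
      rw [hG3adj]
      exact Or.inr ⟨Ne.symm h2, Or.inl rfl⟩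
  -- S G2 ≥ n - 2
  have hS2 : (Fintype.card V : ℝ) - 2 ≤ S G2 := by
    have h1 := hub G2 G3 hadj23
    have h2' : (2 : ℕ) ≤ Fintype.card V := by omega
    have h2 : (Fintype.card V : ℝ) - 2 ≤ (triCount G3 : ℝ) - (triCount G2 : ℝ) := by
      have hc : ((triCount G2 + (Fintype.card V - 2) : ℕ) : ℝ) ≤ (triCount G3 : ℝ) := by
        exact_mod_cast hcount
      push_cast [Nat.cast_sub h2'] at hc
      linarith
    calc (Fintype.card V : ℝ) - 2 ≤ (triCount G3 : ℝ) - (triCount G2 : ℝ) := h2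
      _ ≤ |(triCount G2 : ℝ) - (triCount G3 : ℝ)| := by
          rw [abs_sub_comm]; exact le_abs_self _
      _ ≤ S G2 := h1
  -- distance from G to G2 is at most 2
  have hdist : (NG.dist G G2 : ℝ) ≤ 2 := by
    have hd : NG.dist G G2 ≤ 2 := by
      by_cases hGG2 : G = G2
      · rw [hGG2, SimpleGraph.dist_self]; omega
      by_cases hGG1 : G = G1
      · have hadj : NG.Adj G G2 := by
          rw [hNG]
          refine ⟨hGG2, v2, fun u w hu hw => ?_⟩
          rw [hGG1, hG2adj, hG1]
          simp only [SimpleGraph.sup_adj, starG_adj]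
          tauto
        calc NG.dist G G2 ≤ (hadj.toWalk).length := SimpleGraph.dist_le _
          _ ≤ 2 := by simp
      · have hadj1 : NG.Adj G G1 := by
          rw [hNG]
          refine ⟨hGG1, v1, fun u w hu hw => ?_⟩
          rw [hG1]
          simp only [SimpleGraph.sup_adj, starG_adj]
          tauto
        by_cases h12 : G1 = G2
        · rw [← h12]
          calc NG.dist G G1 ≤ (hadj1.toWalk).length := SimpleGraph.dist_le _
            _ ≤ 2 := by simp
        · have hadj2 : NG.Adj G1 G2 := by
            rw [hNG]
            refine ⟨h12, v2, fun u w hu hw => ?_⟩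
            rw [hG2adj, hG1]
            simp only [SimpleGraph.sup_adj, starG_adj]
            tauto
          calc NG.dist G G2
              ≤ (SimpleGraph.Walk.cons hadj1 hadj2.toWalk).length := SimpleGraph.dist_le _
            _ ≤ 2 := by simp
    exact_mod_cast hd
  -- conclude
  have hsm := hsmooth G G2
  have hexp : Real.exp (-2 * β) ≤ Real.exp (-β * (NG.dist G G2 : ℝ)) := by
    apply Real.exp_le_exp.mpr
    have hd0 : (0 : ℝ) ≤ (NG.dist G G2 : ℝ) := Nat.cast_nonneg _
    nlinarith [hdist, hβ, hd0]
  have hnn : (0 : ℝ) ≤ (Fintype.card V : ℝ) - 2 := by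
    have h3 : (3 : ℝ) ≤ Fintype.card V := by exact_mod_cast hn
    linarith
  calc Real.exp (-2 * β) * ((Fintype.card V : ℝ) - 2)
      ≤ Real.exp (-β * (NG.dist G G2 : ℝ)) * ((Fintype.card V : ℝ) - 2) :=
        mul_le_mul_of_nonneg_right hexp hnn
    _ ≤ Real.exp (-β * (NG.dist G G2 : ℝ)) * S G2 :=
        mul_le_mul_of_nonneg_left hS2 (Real.exp_nonneg _)
    _ ≤ S G := hsm
end

section
/- For any graph G ∈ H_k (maximum degree ≤ k) on n vertices, the number of triangles in G is at most n·k² (in fact at most n·k²/6, but n·k² suffices), while the restricted sensitivity of the triangle-counting query over H_k in the vertex-adjacency model is at most 3k². -/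
section Aux

variable {V : Type*} [Fintype V] [DecidableEq V]

open Finset

set_option linter.unusedSectionVars false in
private lemma triCount_eq (G : SimpleGraph V) [DecidablePred (fun s : Finset V => G.IsNClique 3 s)] :
    triCount G = (univ.filter fun s : Finset V => G.IsNClique 3 s).card := by
  rw [triCount, Set.ncard_eq_toFinset_card']
  congr 1
  ext s
  simp

private lemma tri_thru_vertex (G : SimpleGraph V) [DecidableRel G.Adj] (k : ℕ)
    (hd : ∀ v, (G.neighborSet v).ncard ≤ k) (v : V)
    (P : Finset V → Prop) [DecidablePred P] :
    (univ.filter (fun s : Finset V => G.IsNClique 3 s ∧ P s ∧ v ∈ s)).card ≤ k ^ 2 := by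
  have hdeg : G.degree v ≤ k := by
    have := hd v
    rw [Set.ncard_eq_toFinset_card'] at this
    rwa [SimpleGraph.degree, SimpleGraph.neighborFinset_def]
  calc (univ.filter (fun s : Finset V => G.IsNClique 3 s ∧ P s ∧ v ∈ s)).card
      ≤ ((G.neighborFinset v).powersetCard 2).card := by
        apply Finset.card_le_card_of_injOn (fun s => s.erase v)
        · intro s hs
          simp only [mem_coe, mem_filter, mem_univ, true_and] at hs
          obtain ⟨hclq, _, hv⟩ := hs
          rw [Finset.mem_coe, Finset.mem_powersetCard]
          refine ⟨?_, ?_⟩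
          · intro u hu
            have hus : u ∈ s := Finset.mem_of_mem_erase hu
            have hne : u ≠ v := Finset.ne_of_mem_erase hu
            rw [SimpleGraph.mem_neighborFinset]
            exact hclq.1 hv hus hne.symm
          · rw [Finset.card_erase_of_mem hv, hclq.2]
        · intro s1 h1 s2 h2 h
          simp only [coe_filter, Set.mem_setOf_eq] at h1 h2
          replace h : s1.erase v = s2.erase v := h
          rw [← Finset.insert_erase h1.2.2.2, h, Finset.insert_erase h2.2.2.2]
    _ = (G.degree v).choose 2 := by rw [Finset.card_powersetCard]; rfl
    _ ≤ k.choose 2 := Nat.choose_le_choose 2 hdeg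
    _ ≤ k ^ 2 := Nat.choose_le_pow k 2

private lemma tri_thru_set (G : SimpleGraph V) [DecidableRel G.Adj] (k : ℕ)
    (hd : ∀ v, (G.neighborSet v).ncard ≤ k) (S : Finset V) :
    (univ.filter (fun s : Finset V => G.IsNClique 3 s ∧ ∃ v ∈ S, v ∈ s)).card
      ≤ S.card * k ^ 2 := by
  classical
  calc (univ.filter (fun s : Finset V => G.IsNClique 3 s ∧ ∃ v ∈ S, v ∈ s)).card
      ≤ (S.biUnion (fun v => univ.filter
          (fun s : Finset V => G.IsNClique 3 s ∧ (∃ x ∈ S, x ∈ s) ∧ v ∈ s))).card := by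
        apply Finset.card_le_card
        intro s hs
        simp only [mem_filter, mem_univ, true_and] at hs
        obtain ⟨hclq, v, hvS, hvs⟩ := hs
        rw [Finset.mem_biUnion]
        refine ⟨v, hvS, ?_⟩
        simp only [mem_filter, mem_univ, true_and]
        exact ⟨hclq, ⟨v, hvS, hvs⟩, hvs⟩
    _ ≤ ∑ v ∈ S, (univ.filter
          (fun s : Finset V => G.IsNClique 3 s ∧ (∃ x ∈ S, x ∈ s) ∧ v ∈ s)).card :=
        Finset.card_biUnion_le
    _ ≤ ∑ _v ∈ S, k ^ 2 := by
        apply Finset.sum_le_sum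
        intro v _
        exact tri_thru_vertex G k hd v _
    _ = S.card * k ^ 2 := by rw [Finset.sum_const, smul_eq_mul]

private lemma diff_bound (G1 G2 : SimpleGraph V) (k : ℕ)
    (hd1 : ∀ v, (G1.neighborSet v).ncard ≤ k) (S : Finset V)
    (hagree : ∀ u w, u ∉ S → w ∉ S → (G1.Adj u w ↔ G2.Adj u w)) :
    triCount G1 ≤ triCount G2 + S.card * k ^ 2 := by
  classical
  rw [triCount_eq, triCount_eq]
  calc (univ.filter fun s : Finset V => G1.IsNClique 3 s).card
      ≤ ((univ.filter fun s : Finset V => G2.IsNClique 3 s) ∪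
          (univ.filter fun s : Finset V => G1.IsNClique 3 s ∧ ∃ v ∈ S, v ∈ s)).card := by
        apply Finset.card_le_card
        intro s hs
        simp only [mem_filter, mem_univ, true_and] at hs
        rw [Finset.mem_union]
        by_cases hS : ∃ v ∈ S, v ∈ s
        · right; simp [hs, hS]
        · left
          push_neg at hS
          simp only [mem_filter, mem_univ, true_and]
          refine ⟨?_, hs.2⟩
          intro u hu w hw hne
          have hu' : (u : V) ∈ s := hu
          have hw' : (w : V) ∈ s := hw
          exact (hagree u w (fun h => hS u h hu') (fun h => hS w h hw')).1
            (hs.1 hu hw hne)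
    _ ≤ (univ.filter fun s : Finset V => G2.IsNClique 3 s).card +
          (univ.filter fun s : Finset V => G1.IsNClique 3 s ∧ ∃ v ∈ S, v ∈ s).card :=
        Finset.card_union_le _ _
    _ ≤ _ := by
        gcongr
        exact tri_thru_set G1 k hd1 S

end Aux

section Reach

variable {V : Type*} [Fintype V] [DecidableEq V]

open Finset

open scoped Classical in
set_option maxHeartbeats 1000000 in
private lemma reach_aux (NG : SimpleGraph (SimpleGraph V))
    (hNG : ∀ g h : SimpleGraph V, NG.Adj g h ↔ g ≠ h ∧ ∃ v : V,
      ∀ u w : V, u ≠ v → w ≠ v → (g.Adj u w ↔ h.Adj u w)) :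
    ∀ (n : ℕ) (g h : SimpleGraph V),
      (univ.filter (fun v : V => ∃ u, ¬(g.Adj v u ↔ h.Adj v u))).card ≤ n →
      NG.Reachable g h := by
  classical
  intro n
  induction n with
  | zero =>
    intro g h hc
    have hempty : (univ.filter (fun v : V => ∃ u, ¬(g.Adj v u ↔ h.Adj v u))) = ∅ :=
      Finset.card_eq_zero.1 (Nat.le_zero.1 hc)
    have : g = h := by
      ext u w
      by_contra hcon
      have : u ∈ (univ.filter (fun v : V => ∃ u, ¬(g.Adj v u ↔ h.Adj v u))) := by
        simp only [mem_filter, mem_univ, true_and]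
        exact ⟨w, hcon⟩
      rw [hempty] at this
      exact absurd this (Finset.notMem_empty u)
    exact this ▸ SimpleGraph.Reachable.refl g
  | succ n ih =>
    intro g h hc
    by_cases hgh : g = h
    · exact hgh ▸ SimpleGraph.Reachable.refl g
    · have hex : ∃ v u, ¬(g.Adj v u ↔ h.Adj v u) := by
        by_contra hcon
        push_neg at hcon
        exact hgh (by ext u w; exact hcon u w)
      obtain ⟨v, u₀, hvu⟩ := hex
      set g' : SimpleGraph V :=
        { Adj := fun u w => if u = v ∨ w = v then h.Adj u w else g.Adj u w
          symm := by
            constructor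
            intro u w huw
            simp only [or_comm (a := w = v)] at *
            split at huw <;> rename_i hcond
            · rw [if_pos hcond]; exact huw.symm
            · rw [if_neg hcond]; exact huw.symm
          loopless := by
            constructor
            intro u
            show ¬ (if u = v ∨ u = v then h.Adj u u else g.Adj u u)
            split <;> simp } with hg'def
      have hgv : ∀ x y : V, x ≠ v → y ≠ v → (g.Adj x y ↔ g'.Adj x y) := by
        intro x y hx hy
        show g.Adj x y ↔ if x = v ∨ y = v then h.Adj x y else g.Adj x y
        rw [if_neg (by tauto)]
      have hg'h : ∀ y : V, g'.Adj v y ↔ h.Adj v y := by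
        intro y
        show (if v = v ∨ y = v then h.Adj v y else g.Adj v y) ↔ h.Adj v y
        rw [if_pos (Or.inl rfl)]
      have hg'h2 : ∀ x : V, g'.Adj x v ↔ h.Adj x v := by
        intro x
        show (if x = v ∨ v = v then h.Adj x v else g.Adj x v) ↔ h.Adj x v
        rw [if_pos (Or.inr rfl)]
      have hgg' : g ≠ g' := by
        intro hcon
        apply hvu
        rw [hcon]
        exact hg'h u₀
      have hadj : NG.Adj g g' := (hNG g g').2 ⟨hgg', v, hgv⟩
      have hsub : (univ.filter (fun x : V => ∃ u, ¬(g'.Adj x u ↔ h.Adj x u))) ⊆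
          (univ.filter (fun x : V => ∃ u, ¬(g.Adj x u ↔ h.Adj x u))).erase v := by
        intro x hx
        simp only [mem_filter, mem_univ, true_and] at hx
        obtain ⟨w, hw⟩ := hx
        have hxv : x ≠ v := by
          intro hxe
          rw [hxe] at hw
          exact hw (hg'h w)
        have hwv : w ≠ v := by
          intro hwe
          rw [hwe] at hw
          exact hw (hg'h2 x)
        rw [Finset.mem_erase]
        refine ⟨hxv, ?_⟩
        simp only [mem_filter, mem_univ, true_and]
        exact ⟨w, by rwa [hgv x w hxv hwv]⟩
      have hvmem : v ∈ (univ.filter (fun x : V => ∃ u, ¬(g.Adj x u ↔ h.Adj x u))) := by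
        simp only [mem_filter, mem_univ, true_and]
        exact ⟨u₀, hvu⟩
      have hcard : (univ.filter (fun x : V => ∃ u, ¬(g'.Adj x u ↔ h.Adj x u))).card ≤ n := by
        calc _ ≤ ((univ.filter (fun x : V => ∃ u, ¬(g.Adj x u ↔ h.Adj x u))).erase v).card :=
              Finset.card_le_card hsub
          _ = (univ.filter (fun x : V => ∃ u, ¬(g.Adj x u ↔ h.Adj x u))).card - 1 :=
              Finset.card_erase_of_mem hvmem
          _ ≤ n := by omega
      refine (hadj.reachable).trans (ih g' h ?_)
      refine le_trans (Finset.card_le_card ?_) hcard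
      intro x hx
      simp only [Finset.mem_filter] at hx ⊢
      exact hx

set_option linter.unusedSectionVars false in
private lemma walk_S (NG : SimpleGraph (SimpleGraph V))
    (hNG : ∀ g h : SimpleGraph V, NG.Adj g h ↔ g ≠ h ∧ ∃ v : V,
      ∀ u w : V, u ≠ v → w ≠ v → (g.Adj u w ↔ h.Adj u w))
    {g h : SimpleGraph V} (p : NG.Walk g h) :
    ∃ S : Finset V, S.card ≤ p.length ∧
      ∀ u w, u ∉ S → w ∉ S → (g.Adj u w ↔ h.Adj u w) := by
  induction p with
  | nil => exact ⟨∅, by simp, fun u w _ _ => Iff.rfl⟩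
  | cons hadj p ih =>
    obtain ⟨S, hS, hag⟩ := ih
    obtain ⟨-, v, hv⟩ := (hNG _ _).1 hadj
    refine ⟨insert v S, ?_, ?_⟩
    · calc (insert v S).card ≤ S.card + 1 := Finset.card_insert_le _ _
        _ ≤ _ := by rw [SimpleGraph.Walk.length_cons]; omega
    · intro u w hu hw
      simp only [Finset.mem_insert, not_or] at hu hw
      rw [hv u w hu.1 hw.1, hag u w hu.2 hw.2]

end Reach

/-- For graphs of maximum degree `≤ k` on `n` vertices: the number of triangles is at most
`n·k²`, and the restricted sensitivity of the triangle-counting query over `H_k` in the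
vertex-adjacency model is at most `3k²`: for any `G1, G2 ∈ H_k`,
`|f G1 - f G2| ≤ 3k² · d(G1, G2)` where `d` is the vertex-adjacency distance `NG.dist`. -/
theorem stmt_15 {V : Type*} [Fintype V] (k : ℕ)
    (NG : SimpleGraph (SimpleGraph V))
    (hNG : ∀ g h : SimpleGraph V, NG.Adj g h ↔ g ≠ h ∧ ∃ v : V,
      ∀ u w : V, u ≠ v → w ≠ v → (g.Adj u w ↔ h.Adj u w)) :
    (∀ G : SimpleGraph V, (∀ v, (G.neighborSet v).ncard ≤ k) →
      triCount G ≤ Fintype.card V * k ^ 2) ∧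
    (∀ G1 G2 : SimpleGraph V,
      (∀ v, (G1.neighborSet v).ncard ≤ k) → (∀ v, (G2.neighborSet v).ncard ≤ k) →
      |(triCount G1 : ℝ) - (triCount G2 : ℝ)| ≤ 3 * (k : ℝ) ^ 2 * (NG.dist G1 G2 : ℝ)) := by
  classical
  constructor
  · intro G hG
    rw [triCount_eq]
    calc (Finset.univ.filter fun s : Finset V => G.IsNClique 3 s).card
        ≤ (Finset.univ.filter
            (fun s : Finset V => G.IsNClique 3 s ∧ ∃ v ∈ (Finset.univ : Finset V), v ∈ s)).card := by
          apply Finset.card_le_card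
          intro s hs
          have hs' := (Finset.mem_filter.1 hs).2
          refine Finset.mem_filter.2 ⟨Finset.mem_univ s, hs', ?_⟩
          have hne : s.Nonempty := by
            rw [← Finset.card_pos, hs'.2]; omega
          obtain ⟨v, hv⟩ := hne
          exact ⟨v, Finset.mem_univ v, hv⟩
      _ ≤ (Finset.univ : Finset V).card * k ^ 2 := tri_thru_set G k hG _
      _ = Fintype.card V * k ^ 2 := by rw [Finset.card_univ]
  · intro G1 G2 h1 h2
    have hreach : NG.Reachable G1 G2 :=
      reach_aux NG hNG _ G1 G2 le_rfl
    obtain ⟨p, hp⟩ := hreach.exists_walk_length_eq_dist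
    obtain ⟨S, hS, hag⟩ := walk_S NG hNG p
    rw [hp] at hS
    have hb1 : triCount G1 ≤ triCount G2 + S.card * k ^ 2 :=
      diff_bound G1 G2 k h1 S hag
    have hb2 : triCount G2 ≤ triCount G1 + S.card * k ^ 2 :=
      diff_bound G2 G1 k h2 S (fun u w hu hw => (hag u w hu hw).symm)
    have hkey : (S.card * k ^ 2 : ℝ) ≤ 3 * (k : ℝ) ^ 2 * (NG.dist G1 G2 : ℝ) := by
      have h1' : (S.card : ℝ) ≤ (NG.dist G1 G2 : ℝ) := by exact_mod_cast hS
      have hd0 : (0:ℝ) ≤ (NG.dist G1 G2 : ℝ) := by positivity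
      nlinarith [sq_nonneg (k : ℝ)]
    rw [abs_sub_le_iff]
    constructor
    · have : (triCount G1 : ℝ) ≤ (triCount G2 : ℝ) + (S.card * k ^ 2 : ℝ) := by
        exact_mod_cast hb1
      linarith
    · have : (triCount G2 : ℝ) ≤ (triCount G1 : ℝ) + (S.card * k ^ 2 : ℝ) := by
        exact_mod_cast hb2
      linarith
end

section
/- Greedy potential decrease: for a graph G define φ(G) = Σ_{v : deg(v) ≥ k} (deg(v) − k). Suppose G can be transformed into a graph of maximum degree ≤ k by deleting all edges incident to some set of d vertices (so d(G, H_k) ≤ d in the vertex model). Then there exists a vertex v such that φ(G − v) ≤ (1 − 1/d)·φ(G), where G − v removes all edges incident to v. -/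
/-- The graph obtained from `G` by removing all edges incident to a vertex of `S`. -/
def remSet {V : Type*} (G : SimpleGraph V) (S : Set V) : SimpleGraph V where
  Adj a b := G.Adj a b ∧ a ∉ S ∧ b ∉ S
  symm := ⟨by rintro a b ⟨h, ha, hb⟩; exact ⟨h.symm, hb, ha⟩⟩
  loopless := ⟨by rintro a ⟨h, -, -⟩; exact G.loopless.irrefl a h⟩

/-- The excess-degree potential `φ(G) = Σ_{v : deg v ≥ k} (deg v − k)`. -/
noncomputable def pot {V : Type*} [Fintype V] (k : ℕ) (G : SimpleGraph V) : ℝ :=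
  ∑ v : V, max (((G.neighborSet v).ncard : ℝ) - (k : ℝ)) 0

lemma remSet_nbr_self {V : Type*} (G : SimpleGraph V) (v : V) :
    (remSet G ({v} : Set V)).neighborSet v = ∅ := by
  ext b; simp [remSet, SimpleGraph.neighborSet]

lemma remSet_nbr_ne {V : Type*} (G : SimpleGraph V) {u v : V} (h : u ≠ v) :
    (remSet G ({v} : Set V)).neighborSet u = G.neighborSet u \ {v} := by
  ext b; simp only [SimpleGraph.neighborSet, remSet, Set.mem_setOf_eq, Set.mem_diff,
    Set.mem_singleton_iff]
  tauto

lemma remSet_nbr_not_mem {V : Type*} (G : SimpleGraph V) {S : Set V} {u : V} (h : u ∉ S) :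
    (remSet G S).neighborSet u = G.neighborSet u \ S := by
  ext b; simp only [SimpleGraph.neighborSet, remSet, Set.mem_setOf_eq, Set.mem_diff]
  tauto

/-- Greedy potential decrease: if deleting all edges incident to some set `S` of `d`
vertices turns `G` into a graph of maximum degree `≤ k` (so `d(G, H_k) ≤ d` in the vertex
model), then some vertex `v` satisfies `φ(G − v) ≤ (1 − 1/d)·φ(G)`. -/
theorem stmt_16 {V : Type*} [Fintype V] [Nonempty V] (k d : ℕ)
    (G : SimpleGraph V) (S : Finset V) (hcard : S.card = d)
    (hdel : ∀ v : V, ((remSet G (S : Set V)).neighborSet v).ncard ≤ k) :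
    ∃ v : V, pot k (remSet G {v}) ≤ (1 - 1 / (d : ℝ)) * pot k G := by
  classical
  set f : ℕ → ℝ := fun m => max ((m : ℝ) - k) 0 with hfdef
  have fnonneg : ∀ m, 0 ≤ f m := fun m => le_max_right _ _
  have fmono : ∀ {a b : ℕ}, a ≤ b → f a ≤ f b := by
    intro a b h
    exact max_le_max (sub_le_sub_right (by exact_mod_cast h) _) le_rfl
  set n : V → ℕ := fun u => (G.neighborSet u).ncard with hn
  set n' : V → V → ℕ := fun u v => ((remSet G ({v} : Set V)).neighborSet u).ncard with hn'
  have hn'le : ∀ u v, n' u v ≤ n u := by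
    intro u v
    apply Set.ncard_le_ncard _ (Set.toFinite _)
    intro b hb
    exact hb.1
  have hpotG : pot k G = ∑ u : V, f (n u) := rfl
  have hpotv : ∀ v, pot k (remSet G ({v} : Set V)) = ∑ u : V, f (n' u v) := fun v => rfl
  -- key per-vertex inequality
  have key : ∀ u : V, f (n u) ≤ ∑ v ∈ S, (f (n u) - f (n' u v)) := by
    intro u
    by_cases hk : n u ≤ k
    · have : f (n u) = 0 := by
        simp only [hfdef, max_eq_right_iff]
        have : (n u : ℝ) ≤ k := by exact_mod_cast hk
        linarith
      rw [this]
      apply Finset.sum_nonneg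
      intro v _
      have := fmono (hn'le u v)
      linarith
    push_neg at hk
    by_cases huS : u ∈ S
    · -- the term v = u alone contributes f (n u)
      have hterm : f (n u) - f (n' u u) = f (n u) := by
        have : n' u u = 0 := by
          simp only [hn', remSet_nbr_self, Set.ncard_empty]
        rw [this]
        simp [hfdef]
      calc f (n u) = f (n u) - f (n' u u) := hterm.symm
        _ ≤ ∑ v ∈ S, (f (n u) - f (n' u v)) := by
            exact Finset.single_le_sum (f := fun v => f (n u) - f (n' u v))
              (fun v _ => sub_nonneg.mpr (fmono (hn'le u v))) huS
    · -- u ∉ S : adjacent vertices in S each contribute 1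
      set T : Finset V := S.filter (fun v => v ∈ G.neighborSet u) with hT
      have hTS : T ⊆ S := Finset.filter_subset _ _
      have hcardT : n u ≤ k + T.card := by
        have hsub : G.neighborSet u ⊆ (G.neighborSet u \ (S : Set V)) ∪ (T : Set V) := by
          intro b hb
          by_cases hbS : b ∈ S
          · right
            simp only [hT, Finset.mem_coe, Finset.mem_filter]
            exact ⟨hbS, hb⟩
          · left; exact ⟨hb, hbS⟩
        have h1 : n u ≤ (G.neighborSet u \ (S : Set V)).ncard + (T : Set V).ncard :=
          le_trans (Set.ncard_le_ncard hsub (Set.toFinite _)) (Set.ncard_union_le _ _)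
        have h2 : (G.neighborSet u \ (S : Set V)).ncard ≤ k := by
          rw [← remSet_nbr_not_mem G (by simpa using huS)]
          exact hdel u
        have h3 : (T : Set V).ncard = T.card := Set.ncard_coe_finset T
        omega
      have hstep : ∀ v ∈ S, (if v ∈ T then (1 : ℝ) else 0) ≤ f (n u) - f (n' u v) := by
        intro v hv
        by_cases hvT : v ∈ T
        · simp only [hvT, if_true]
          have hadj : v ∈ G.neighborSet u := (Finset.mem_filter.mp hvT).2
          have huv : u ≠ v := fun h => huS (h ▸ hv)
          have hnv : n' u v = n u - 1 := by
            simp only [hn', remSet_nbr_ne G huv]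
            exact Set.ncard_diff_singleton_of_mem hadj
          have hpos : 1 ≤ n u := by omega
          have e1 : f (n u) = (n u : ℝ) - k := by
            simp only [hfdef, max_eq_left_iff]
            have : (k : ℝ) < n u := by exact_mod_cast hk
            linarith
          have e2 : f (n' u v) = (n u : ℝ) - 1 - k := by
            rw [hnv]
            simp only [hfdef]
            have hc : ((n u - 1 : ℕ) : ℝ) = (n u : ℝ) - 1 := by
              push_cast [hpos]; ring
            rw [hc, max_eq_left_iff]
            have : (k : ℝ) < n u := by exact_mod_cast hk
            have : (k : ℝ) + 1 ≤ n u := by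
              have : (k + 1 : ℕ) ≤ n u := hk
              exact_mod_cast this
            linarith
          rw [e1, e2]; ring_nf; linarith
        · simp only [hvT, if_false]
          have := fmono (hn'le u v)
          linarith
      have hsum : ∑ v ∈ S, (if v ∈ T then (1 : ℝ) else 0) = T.card := by
        rw [Finset.sum_ite_mem]
        rw [Finset.inter_eq_right.mpr hTS]
        simp
      have hfn : f (n u) ≤ (T.card : ℝ) := by
        have e1 : f (n u) = (n u : ℝ) - k := by
          simp only [hfdef, max_eq_left_iff]
          have : (k : ℝ) < n u := by exact_mod_cast hk
          linarith
        rw [e1]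
        have : (n u : ℝ) ≤ k + T.card := by exact_mod_cast hcardT
        linarith
      calc f (n u) ≤ (T.card : ℝ) := hfn
        _ = ∑ v ∈ S, (if v ∈ T then (1 : ℝ) else 0) := hsum.symm
        _ ≤ ∑ v ∈ S, (f (n u) - f (n' u v)) := Finset.sum_le_sum hstep
  -- total drop over S is at least pot G
  have total : pot k G ≤ ∑ v ∈ S, (pot k G - pot k (remSet G ({v} : Set V))) := by
    rw [hpotG]
    calc ∑ u : V, f (n u) ≤ ∑ u : V, ∑ v ∈ S, (f (n u) - f (n' u v)) :=
          Finset.sum_le_sum (fun u _ => key u)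
      _ = ∑ v ∈ S, ∑ u : V, (f (n u) - f (n' u v)) := Finset.sum_comm
      _ = ∑ v ∈ S, (pot k G - pot k (remSet G ({v} : Set V))) := by
          apply Finset.sum_congr rfl
          intro v _
          rw [hpotG, hpotv v, Finset.sum_sub_distrib]
  by_cases hd : d = 0
  · subst hd
    have hS : S = ∅ := Finset.card_eq_zero.mp hcard
    obtain ⟨v⟩ := ‹Nonempty V›
    refine ⟨v, ?_⟩
    have hGk : ∀ u, n u ≤ k := by
      intro u
      have := hdel u
      rwa [hS, Finset.coe_empty, remSet_nbr_not_mem G (Set.notMem_empty u), Set.diff_empty] at this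
    have hpot0 : pot k G = 0 := by
      rw [hpotG]
      apply Finset.sum_eq_zero
      intro u _
      simp only [hfdef, max_eq_right_iff]
      have : (n u : ℝ) ≤ k := by exact_mod_cast hGk u
      linarith
    have hle : pot k (remSet G ({v} : Set V)) ≤ 0 := by
      rw [hpotv v, ← hpot0, hpotG]
      exact Finset.sum_le_sum (fun u _ => fmono (hn'le u v))
    simpa [hpot0] using hle
  · have hdpos : (0 : ℝ) < d := by positivity
    have havg : ∃ v ∈ S, pot k G / d ≤ pot k G - pot k (remSet G ({v} : Set V)) := by
      by_contra hcon
      push_neg at hcon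
      have : ∑ v ∈ S, (pot k G - pot k (remSet G ({v} : Set V))) < ∑ v ∈ S, pot k G / d := by
        apply Finset.sum_lt_sum_of_nonempty
        · rw [← Finset.card_pos, hcard]; omega
        · exact fun v hv => hcon v hv
      rw [Finset.sum_const, hcard, nsmul_eq_mul, mul_div_cancel₀ _ (ne_of_gt hdpos)] at this
      linarith
    obtain ⟨v, _, hv⟩ := havg
    refine ⟨v, ?_⟩
    have : (1 - 1 / (d : ℝ)) * pot k G = pot k G - pot k G / d := by ring
    rw [this]
    linarith
end
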